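/- Let w be a weight on I and let g = Σ_{i=1}^n b_i·χ_{[t_{i−1},t_i)} with b_1 ≥ b_2 ≥ … ≥ b_n > 0 and 0 = t_0 < t_1 < … < t_n < ∞, t_n ∈ I, and set G(t) = ∫₀ᵗ g. Then inf_{0 < t ≤ t_n} W(t)/G(t) = min_{1 ≤ i ≤ n} W(t_i)/G(t_i). In particular, g ≺ w if and only if G(t_i) ≤ W(t_i) for each i = 1, …, n. -/

import Mathlib

open MeasureTheory Set Filter
open scoped ENNReal

noncomputable section

/-- The decreasing rearrangement of `f` with respect to Lebesgue measure on `I`. -/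
def decRearr (I : Set ℝ) (f : ℝ → ℝ) (t : ℝ) : ℝ :=
  sInf {l : ℝ | 0 < l ∧ volume {s | s ∈ I ∧ l < |f s|} ≤ ENNReal.ofReal t}

/-- `φ(a/b)·b` with the convention `φ(c/0)·0 = 0` if `c = 0` and `= ∞` if `c ≠ 0`. -/
def phiRatio (φ : ℝ → ℝ) (a b : ℝ) : ℝ≥0∞ :=
  if b = 0 then (if a = 0 then 0 else ⊤) else ENNReal.ofReal (φ (a / b) * b)

/-- Submajorization `g ≺ w` on `I` : `∫₀ᵗ g* ≤ ∫₀ᵗ w` for all `t ∈ I`. -/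
def Submaj (I : Set ℝ) (w g : ℝ → ℝ) : Prop :=
  ∀ t ∈ I, ∫⁻ s in Ioo (0:ℝ) t, ENNReal.ofReal (decRearr I g s)
      ≤ ∫⁻ s in Ioo (0:ℝ) t, ENNReal.ofReal (w s)

/-- The modular `P_{φ,w}(f) = inf { ∫_I φ(f*/|g|)|g| : g ≺ w }`. -/
def Pmod (I : Set ℝ) (φ w f : ℝ → ℝ) : ℝ≥0∞ :=
  sInf { v : ℝ≥0∞ | ∃ g : ℝ → ℝ, Measurable g ∧ Submaj I w g ∧
      v = ∫⁻ t in I, phiRatio φ (decRearr I f t) |g t| }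

/-- The modular `I_{φ,w}(f) = ∫_I φ(f*) w`. -/
def Imod (I : Set ℝ) (φ w f : ℝ → ℝ) : ℝ≥0∞ :=
  ∫⁻ t in I, ENNReal.ofReal (φ (decRearr I f t) * w t)

/-- The Marcinkiewicz norm `‖g‖_{M_W} = sup_{t ∈ I, t > 0} (∫₀ᵗ g*)/W(t)`. -/
def MWnorm (I : Set ℝ) (w g : ℝ → ℝ) : ℝ≥0∞ :=
  ⨆ t ∈ I ∩ Ioi (0:ℝ),
    (∫⁻ s in Ioo (0:ℝ) t, ENNReal.ofReal (decRearr I g s)) /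
      ENNReal.ofReal (∫ s in Ioo (0:ℝ) t, w s)

/-- An Orlicz function: `φ(0) = 0`, `φ` convex, strictly increasing, `[0,∞) → [0,∞)`. -/
def OrliczOn (φ : ℝ → ℝ) : Prop :=
  φ 0 = 0 ∧ ConvexOn ℝ (Ici 0) φ ∧ StrictMonoOn φ (Ici 0) ∧ ∀ t, 0 ≤ t → 0 ≤ φ t

/-- An N-function: an Orlicz function with `φ(t)/t → 0` at `0⁺` and `φ(t)/t → ∞` at `∞`. -/
def NFun (φ : ℝ → ℝ) : Prop :=
  OrliczOn φ ∧ Tendsto (fun t => φ t / t) (nhdsWithin 0 (Ioi 0)) (nhds 0) ∧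
    Tendsto (fun t => φ t / t) atTop atTop

/-- The complementary function `φ*(s) = sup_{t ≥ 0} (st - φ(t))`. -/
def phiStar (φ : ℝ → ℝ) (s : ℝ) : ℝ := sSup ((fun t => s * t - φ t) '' Ici 0)

/-- The (generalized) inverse of an Orlicz function. -/
def phiInv (φ : ℝ → ℝ) (s : ℝ) : ℝ := sInf {t : ℝ | 0 ≤ t ∧ s ≤ φ t}

/-- The Calderón–Lozanovskii function `ρ_φ(t,s) = φ⁻¹(s/t)·t`. -/
def rhoFun (φ : ℝ → ℝ) (t s : ℝ) : ℝ := phiInv φ (s / t) * t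

/-- A weight on `I`: positive, decreasing and locally integrable. -/
def IsWeight (I : Set ℝ) (w : ℝ → ℝ) : Prop :=
  (∀ t ∈ I, 0 < w t) ∧ AntitoneOn w I ∧ ∀ t ∈ I, IntegrableOn w (Ioo 0 t)

/-- `I = [0,α)` with `0 < α ≤ ∞`. -/
def OLDomain (I : Set ℝ) : Prop := I = Ici 0 ∨ ∃ α : ℝ, 0 < α ∧ I = Ico 0 α

/-- The step function `Σ aᵢ χ_{[tᵢ₋₁,tᵢ)}`. -/
def stepFun (n : ℕ) (tt : Fin (n+1) → ℝ) (a : Fin n → ℝ) (s : ℝ) : ℝ :=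
  ∑ i : Fin n, if tt i.castSucc ≤ s ∧ s < tt i.succ then a i else 0

/-- `R(a,b) = F(a,b)/W(a,b)` where `F(a,b) = ∫_a^b f`, `W(a,b) = ∫_a^b w`. -/
def Rquot (w f : ℝ → ℝ) (a b : ℝ) : ℝ :=
  (∫ s in Ioo a b, f s) / (∫ s in Ioo a b, w s)

/-- `(a,b)` is a level interval of `f` with respect to `w`. -/
def IsLI (I : Set ℝ) (w f : ℝ → ℝ) (a b : ℝ) : Prop :=
  0 ≤ a ∧ a < b ∧ Ioo a b ⊆ I ∧ 0 < Rquot w f a b ∧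
    ∀ t ∈ Ioo a b, Rquot w f a t ≤ Rquot w f a b

/-- `(a,b)` is a maximal level interval of `f` with respect to `w`. -/
def IsMLI (I : Set ℝ) (w f : ℝ → ℝ) (a b : ℝ) : Prop :=
  IsLI I w f a b ∧ ∀ a' b', IsLI I w f a' b' → Ioo a b ⊆ Ioo a' b' → a = a' ∧ b = b'

/-- `f0` is a level function of `f` with respect to `w`. -/
def IsLevelFun (I : Set ℝ) (w f f0 : ℝ → ℝ) : Prop :=
  (∀ a b, IsMLI I w f a b → ∀ t ∈ Ioo a b, f0 t = Rquot w f a b * w t) ∧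
  (∀ t ∈ I, (∀ a b, IsMLI I w f a b → t ∉ Ioo a b) → f0 t = f t)

/-- The Köthe dual norm of the Orlicz–Lorentz space `Λ_{φ,w}` with the Luxemburg norm. -/
def KDnorm (I : Set ℝ) (φ w f : ℝ → ℝ) : ℝ≥0∞ :=
  sSup { v : ℝ≥0∞ | ∃ g : ℝ → ℝ, Measurable g ∧
      ({ε : ℝ | 0 < ε ∧ Imod I φ w (fun t => g t / ε) ≤ 1}).Nonempty ∧
      sInf {ε : ℝ | 0 < ε ∧ Imod I φ w (fun t => g t / ε) ≤ 1} ≤ 1 ∧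
      IntegrableOn (fun t => f t * g t) I ∧
      v = ENNReal.ofReal (∫ t in I, f t * g t) }

section StepAux

variable {I : Set ℝ} {w : ℝ → ℝ} {n : ℕ} {tt : Fin (n+1) → ℝ} {b : Fin n → ℝ}

lemma mem_I_of_le (hI : OLDomain I) {t x : ℝ} (ht : t ∈ I) (h0 : 0 ≤ x) (hx : x ≤ t) : x ∈ I := by
  rcases hI with rfl | ⟨α, hα, rfl⟩
  · exact h0
  · exact ⟨h0, lt_of_le_of_lt hx ht.2⟩

lemma stepFun_nonneg (hbpos : ∀ i, 0 < b i) (s : ℝ) : 0 ≤ stepFun n tt b s :=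
  Finset.sum_nonneg fun i _ => by
    by_cases h : tt i.castSucc ≤ s ∧ s < tt i.succ
    · rw [if_pos h]; exact (hbpos i).le
    · rw [if_neg h]

lemma stepFun_eq (httm : StrictMono tt) {i : Fin n} {s : ℝ}
    (h1 : tt i.castSucc ≤ s) (h2 : s < tt i.succ) : stepFun n tt b s = b i := by
  unfold stepFun
  rw [Finset.sum_eq_single i]
  · rw [if_pos ⟨h1, h2⟩]
  · intro j _ hj
    rw [if_neg]
    rintro ⟨hj1, hj2⟩
    rcases lt_or_gt_of_ne hj with h | h
    · have hle : (j.succ : Fin (n+1)) ≤ i.castSucc := by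
        simp only [Fin.le_def, Fin.val_succ, Fin.coe_castSucc]
        exact h
      have := httm.monotone hle
      linarith
    · have hle : (i.succ : Fin (n+1)) ≤ j.castSucc := by
        simp only [Fin.le_def, Fin.val_succ, Fin.coe_castSucc]
        exact h
      have := httm.monotone hle
      linarith
  · intro h; exact absurd (Finset.mem_univ i) h

lemma exists_piece (httm : StrictMono tt) {s : ℝ} (h0 : tt 0 ≤ s) (h1 : s < tt (Fin.last n)) :
    ∃ i : Fin n, tt i.castSucc ≤ s ∧ s < tt i.succ := by
  have hn : 0 < n := by
    rcases Nat.eq_zero_or_pos n with rfl | h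
    · have : (0 : Fin 1) = Fin.last 0 := rfl
      rw [← this] at h1
      linarith
    · exact h
  classical
  set S := Finset.univ.filter (fun i : Fin n => tt i.castSucc ≤ s) with hS
  have hne : S.Nonempty := by
    refine ⟨⟨0, hn⟩, ?_⟩
    simp only [hS, Finset.mem_filter, Finset.mem_univ, true_and]
    have : (⟨0, hn⟩ : Fin n).castSucc = 0 := rfl
    rw [this]; exact h0
  set i := S.max' hne with hi
  have hiS : i ∈ S := S.max'_mem hne
  have hile : tt i.castSucc ≤ s := by
    simp only [hS, Finset.mem_filter] at hiS; exact hiS.2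
  refine ⟨i, hile, ?_⟩
  by_contra hcon
  push_neg at hcon
  have hlt : (i : ℕ) + 1 < n := by
    rcases lt_or_eq_of_le (Nat.succ_le_of_lt i.isLt) with h | h
    · exact h
    · exfalso
      have : (i.succ : Fin (n+1)) = Fin.last n := by
        apply Fin.ext; simpa using h
      rw [this] at hcon
      linarith
  have hjS : (⟨(i : ℕ) + 1, hlt⟩ : Fin n) ∈ S := by
    simp only [hS, Finset.mem_filter, Finset.mem_univ, true_and]
    have : (⟨(i : ℕ) + 1, hlt⟩ : Fin n).castSucc = i.succ := rfl
    rw [this]; exact hcon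
  have := S.le_max' _ hjS
  rw [← hi] at this
  simp only [Fin.le_def] at this
  omega

lemma exists_piece' (httm : StrictMono tt) {s : ℝ} (h0 : tt 0 < s) (h1 : s ≤ tt (Fin.last n)) :
    ∃ i : Fin n, tt i.castSucc < s ∧ s ≤ tt i.succ := by
  have hn : 0 < n := by
    rcases Nat.eq_zero_or_pos n with rfl | h
    · have : (0 : Fin 1) = Fin.last 0 := rfl
      rw [← this] at h1
      linarith
    · exact h
  classical
  set S := Finset.univ.filter (fun i : Fin n => s ≤ tt i.succ) with hS
  have hne : S.Nonempty := by
    refine ⟨⟨n - 1, by omega⟩, ?_⟩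
    simp only [hS, Finset.mem_filter, Finset.mem_univ, true_and]
    have : (⟨n - 1, by omega⟩ : Fin n).succ = Fin.last n := by
      apply Fin.ext; simp; omega
    rw [this]; exact h1
  set i := S.min' hne with hi
  have hiS : i ∈ S := S.min'_mem hne
  have hile : s ≤ tt i.succ := by
    simp only [hS, Finset.mem_filter] at hiS; exact hiS.2
  refine ⟨i, ?_, hile⟩
  by_contra hcon
  push_neg at hcon
  have hpos : 0 < (i : ℕ) := by
    rcases Nat.eq_zero_or_pos (i : ℕ) with h | h
    · exfalso
      have : (i.castSucc : Fin (n+1)) = 0 := by apply Fin.ext; simp [h]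
      rw [this] at hcon
      linarith
    · exact h
  have hjS : (⟨(i : ℕ) - 1, by omega⟩ : Fin n) ∈ S := by
    simp only [hS, Finset.mem_filter, Finset.mem_univ, true_and]
    have : (⟨(i : ℕ) - 1, by omega⟩ : Fin n).succ = i.castSucc := by
      apply Fin.ext; simp; omega
    rw [this]; exact hcon
  have h2 := S.min'_le _ hjS
  have h3 : i ≤ (⟨(i : ℕ) - 1, by omega⟩ : Fin n) := h2
  simp only [Fin.le_def] at h3
  omega

end StepAux
section StepAux2

variable {I : Set ℝ} {w : ℝ → ℝ} {n : ℕ} {tt : Fin (n+1) → ℝ} {b : Fin n → ℝ}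

lemma stepFun_pos_mem (httm : StrictMono tt) (hbpos : ∀ i, 0 < b i) {x l : ℝ}
    (hl : 0 < l) (h : l < |stepFun n tt b x|) :
    ∃ j : Fin n, tt j.castSucc ≤ x ∧ x < tt j.succ ∧ l < b j := by
  have hx : stepFun n tt b x ≠ 0 := by
    intro h0
    rw [h0] at h
    simp only [abs_zero] at h
    linarith
  unfold stepFun at hx
  obtain ⟨j, _, hj⟩ := Finset.exists_ne_zero_of_sum_ne_zero hx
  have hcond : tt j.castSucc ≤ x ∧ x < tt j.succ := by
    by_contra hc
    rw [if_neg hc] at hj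
    exact hj rfl
  refine ⟨j, hcond.1, hcond.2, ?_⟩
  have := stepFun_eq (b := b) httm hcond.1 hcond.2
  rw [this, abs_of_pos (hbpos j)] at h
  exact h

lemma decRearr_stepFun (hI : OLDomain I) (htt0 : tt 0 = 0) (httm : StrictMono tt)
    (httI : tt (Fin.last n) ∈ I) (hb : Antitone b) (hbpos : ∀ i, 0 < b i)
    {i : Fin n} {s : ℝ} (h1 : tt i.castSucc ≤ s) (h2 : s < tt i.succ) :
    decRearr I (stepFun n tt b) s = b i := by
  have h0s : 0 ≤ s := le_trans (htt0 ▸ httm.monotone (Fin.zero_le _)) h1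
  apply IsLeast.csInf_eq
  constructor
  · refine ⟨hbpos i, ?_⟩
    have hsub : {x | x ∈ I ∧ b i < |stepFun n tt b x|} ⊆ Ico 0 (tt i.castSucc) := by
      rintro x ⟨hxI, hx⟩
      obtain ⟨j, hj1, hj2, hj3⟩ := stepFun_pos_mem httm hbpos (hbpos i) hx
      have hji : (j : ℕ) < (i : ℕ) := by
        by_contra hh
        push_neg at hh
        exact absurd (hb (show i ≤ j from hh)) (not_le.2 hj3)
      constructor
      · exact le_trans (htt0 ▸ httm.monotone (Fin.zero_le _)) hj1
      · refine lt_of_lt_of_le hj2 (httm.monotone ?_)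
        simp only [Fin.le_def, Fin.val_succ, Fin.coe_castSucc]
        omega
    calc volume {x | x ∈ I ∧ b i < |stepFun n tt b x|}
        ≤ volume (Ico 0 (tt i.castSucc)) := measure_mono hsub
      _ = ENNReal.ofReal (tt i.castSucc - 0) := Real.volume_Ico
      _ ≤ ENNReal.ofReal s := ENNReal.ofReal_le_ofReal (by linarith)
  · rintro l ⟨hl, hvol⟩
    by_contra hh
    push_neg at hh
    have hsup : Ico 0 (tt i.succ) ⊆ {x | x ∈ I ∧ l < |stepFun n tt b x|} := by
      rintro x ⟨hx0, hx1⟩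
      have hxlast : x < tt (Fin.last n) ∨ x < tt i.succ ∧ tt i.succ = tt (Fin.last n) := by
        rcases lt_or_eq_of_le (httm.monotone (Fin.le_last i.succ)) with h | h
        · exact Or.inl (lt_of_lt_of_le hx1 h.le)
        · exact Or.inr ⟨hx1, h⟩
      have hxlt : x < tt (Fin.last n) := by
        rcases hxlast with h | ⟨h, he⟩
        · exact h
        · rw [← he]; exact h
      have hxI : x ∈ I := mem_I_of_le hI httI hx0 hxlt.le
      obtain ⟨j, hj1, hj2⟩ := exists_piece httm (htt0 ▸ hx0) hxlt
      have hji : (j : ℕ) ≤ (i : ℕ) := by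
        have hx2 : tt j.castSucc < tt i.succ := lt_of_le_of_lt hj1 hx1
        have := httm.lt_iff_lt.1 hx2
        simp only [Fin.lt_def, Fin.val_succ, Fin.coe_castSucc] at this
        omega
      refine ⟨hxI, ?_⟩
      rw [stepFun_eq httm hj1 hj2, abs_of_pos (hbpos j)]
      exact lt_of_lt_of_le hh (hb (show j ≤ i from hji))
    have hge : ENNReal.ofReal (tt i.succ) ≤ ENNReal.ofReal s := by
      calc ENNReal.ofReal (tt i.succ) = volume (Ico 0 (tt i.succ)) := by
            rw [Real.volume_Ico, sub_zero]
        _ ≤ volume {x | x ∈ I ∧ l < |stepFun n tt b x|} := measure_mono hsup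
        _ ≤ ENNReal.ofReal s := hvol
    have := (ENNReal.ofReal_le_ofReal_iff h0s).1 hge
    linarith

lemma decRearr_stepFun_zero (htt0 : tt 0 = 0) (httm : StrictMono tt)
    (hbpos : ∀ i, 0 < b i) {s : ℝ} (hs : tt (Fin.last n) ≤ s) :
    decRearr I (stepFun n tt b) s = 0 := by
  have hset : {l : ℝ | 0 < l ∧ volume {x | x ∈ I ∧ l < |stepFun n tt b x|} ≤ ENNReal.ofReal s}
      = Ioi 0 := by
    ext l
    simp only [mem_setOf_eq, mem_Ioi]
    refine ⟨fun h => h.1, fun hl => ⟨hl, ?_⟩⟩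
    have hsub : {x | x ∈ I ∧ l < |stepFun n tt b x|} ⊆ Ico 0 (tt (Fin.last n)) := by
      rintro x ⟨hxI, hx⟩
      obtain ⟨j, hj1, hj2, _⟩ := stepFun_pos_mem httm hbpos hl hx
      constructor
      · exact le_trans (htt0 ▸ httm.monotone (Fin.zero_le _)) hj1
      · exact lt_of_lt_of_le hj2 (httm.monotone (Fin.le_last _))
    calc volume {x | x ∈ I ∧ l < |stepFun n tt b x|}
        ≤ volume (Ico 0 (tt (Fin.last n))) := measure_mono hsub
      _ = ENNReal.ofReal (tt (Fin.last n) - 0) := Real.volume_Ico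
      _ ≤ ENNReal.ofReal s := ENNReal.ofReal_le_ofReal (by linarith)
  unfold decRearr
  rw [hset]
  exact csInf_Ioi

lemma stepFun_integrable : Integrable (stepFun n tt b) volume := by
  have heq : stepFun n tt b
      = fun s => ∑ i : Fin n, (Ico (tt i.castSucc) (tt i.succ)).indicator (fun _ => b i) s := by
    funext s
    unfold stepFun
    refine Finset.sum_congr rfl fun i _ => ?_
    rw [Set.indicator_apply]
    simp [Set.mem_Ico]
  rw [heq]
  refine integrable_finset_sum _ fun i _ => ?_
  exact (integrableOn_const (by rw [Real.volume_Ico]; exact ENNReal.ofReal_ne_top)).integrable_indicator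
    measurableSet_Ico

lemma integral_split {f : ℝ → ℝ} {u v : ℝ} (h0 : 0 ≤ u) (huv : u ≤ v)
    (hf : IntegrableOn f (Ioo 0 v)) :
    ∫ s in Ioo (0:ℝ) v, f s = (∫ s in Ioo (0:ℝ) u, f s) + ∫ s in Ioo u v, f s := by
  rcases eq_or_lt_of_le h0 with rfl | hu
  · simp [Set.Ioo_self]
  · have hdisj : Disjoint (Ioo (0:ℝ) u) (Ico u v) :=
      Set.disjoint_left.2 fun x hx hx' => absurd hx.2 (not_lt.2 hx'.1)
    have hf1 : IntegrableOn f (Ioo 0 u) := hf.mono_set (Set.Ioo_subset_Ioo_right huv)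
    have hf2 : IntegrableOn f (Ico u v) :=
      hf.mono_set fun x hx => ⟨lt_of_lt_of_le hu hx.1, hx.2⟩
    rw [← Set.Ioo_union_Ico_eq_Ioo hu huv, setIntegral_union hdisj measurableSet_Ico hf1 hf2,
      integral_Ico_eq_integral_Ioo]

lemma integral_stepFun_piece (httm : StrictMono tt) {i : Fin n} {u v : ℝ}
    (h1 : tt i.castSucc ≤ u) (h2 : u ≤ v) (h3 : v ≤ tt i.succ) :
    ∫ s in Ioo u v, stepFun n tt b s = b i * (v - u) := by
  rw [setIntegral_congr_fun measurableSet_Ioo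
    (fun x hx => stepFun_eq httm (le_trans h1 hx.1.le) (lt_of_lt_of_le hx.2 h3))]
  rw [setIntegral_const, measureReal_def, Real.volume_Ioo, ENNReal.toReal_ofReal (by linarith), smul_eq_mul]
  ring

end StepAux2
section StepAux3

variable {I : Set ℝ} {w : ℝ → ℝ} {n : ℕ} {tt : Fin (n+1) → ℝ} {b : Fin n → ℝ}

lemma arith_combo {c Ga bi t a d Wa It Td wt : ℝ} (hta : a < t) (hdt : t ≤ d)
    (h1 : c * Ga ≤ Wa) (h2 : c * (Ga + bi * (d - a)) ≤ Wa + It + Td)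
    (h3 : (t - a) * wt ≤ It) (h4 : Td ≤ (d - t) * wt) :
    c * (Ga + bi * (t - a)) ≤ Wa + It := by
  have m1 := mul_le_mul_of_nonneg_left h1 (by linarith : (0:ℝ) ≤ d - t)
  have m2 := mul_le_mul_of_nonneg_left h2 (by linarith : (0:ℝ) ≤ t - a)
  have m3 := mul_le_mul_of_nonneg_left h3 (by linarith : (0:ℝ) ≤ d - t)
  have m4 := mul_le_mul_of_nonneg_left h4 (by linarith : (0:ℝ) ≤ t - a)
  have final : (d - a) * (c * (Ga + bi * (t - a))) ≤ (d - a) * (Wa + It) := by nlinarith [m1, m2, m3, m4]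
  exact le_of_mul_le_mul_left final (by linarith)

lemma integral_w_ge (hI : OLDomain I) (hw : IsWeight I w) {T : ℝ} (hT : T ∈ I)
    {a t : ℝ} (h0 : 0 ≤ a) (hat : a ≤ t) (ht0 : 0 < t) (htT : t ≤ T) :
    (t - a) * w t ≤ ∫ s in Ioo a t, w s := by
  have htI : t ∈ I := mem_I_of_le hI hT ht0.le htT
  have hwint : IntegrableOn w (Ioo a t) :=
    (hw.2.2 t htI).mono_set fun x hx => ⟨lt_of_le_of_lt h0 hx.1, hx.2⟩
  have hconst : IntegrableOn (fun _ : ℝ => w t) (Ioo a t) :=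
    integrableOn_const (by rw [Real.volume_Ioo]; exact ENNReal.ofReal_ne_top)
  have hmono : ∀ x ∈ Ioo a t, w t ≤ w x := fun x hx =>
    hw.2.1 (mem_I_of_le hI htI (lt_of_le_of_lt h0 hx.1).le hx.2.le) htI hx.2.le
  have := setIntegral_mono_on hconst hwint measurableSet_Ioo hmono
  calc (t - a) * w t
      = ∫ _ in Ioo a t, w t := by
        rw [setIntegral_const, measureReal_def, Real.volume_Ioo, ENNReal.toReal_ofReal (by linarith), smul_eq_mul]
    _ ≤ ∫ s in Ioo a t, w s := this

lemma integral_w_le (hI : OLDomain I) (hw : IsWeight I w) {T : ℝ} (hT : T ∈ I)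
    {t d : ℝ} (ht0 : 0 < t) (htd : t ≤ d) (hdT : d ≤ T) :
    ∫ s in Ioo t d, w s ≤ (d - t) * w t := by
  have hdI : d ∈ I := mem_I_of_le hI hT (by linarith) hdT
  have htI : t ∈ I := mem_I_of_le hI hdI ht0.le htd
  have hwint : IntegrableOn w (Ioo t d) :=
    (hw.2.2 d hdI).mono_set fun x hx => ⟨lt_trans ht0 hx.1, hx.2⟩
  have hconst : IntegrableOn (fun _ : ℝ => w t) (Ioo t d) :=
    integrableOn_const (by rw [Real.volume_Ioo]; exact ENNReal.ofReal_ne_top)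
  have hmono : ∀ x ∈ Ioo t d, w x ≤ w t := fun x hx =>
    hw.2.1 htI (mem_I_of_le hI hdI (lt_trans ht0 hx.1).le hx.2.le) hx.1.le
  have := setIntegral_mono_on hwint hconst measurableSet_Ioo hmono
  calc ∫ s in Ioo t d, w s ≤ ∫ _ in Ioo t d, w t := this
    _ = (d - t) * w t := by
        rw [setIntegral_const, measureReal_def, Real.volume_Ioo, ENNReal.toReal_ofReal (by linarith), smul_eq_mul]

lemma key_ineq (hI : OLDomain I) (hw : IsWeight I w) (htt0 : tt 0 = 0)
    (httm : StrictMono tt) (httI : tt (Fin.last n) ∈ I) (c : ℝ)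
    (hc : ∀ i : Fin n, c * (∫ s in Ioo (0:ℝ) (tt i.succ), stepFun n tt b s)
        ≤ ∫ s in Ioo (0:ℝ) (tt i.succ), w s)
    {t : ℝ} (ht0 : 0 < t) (ht1 : t ≤ tt (Fin.last n)) :
    c * (∫ s in Ioo (0:ℝ) t, stepFun n tt b s) ≤ ∫ s in Ioo (0:ℝ) t, w s := by
  obtain ⟨i, hat, htd⟩ := exists_piece' httm (htt0 ▸ ht0) ht1
  set a := tt i.castSucc with ha
  set d := tt i.succ with hd
  have ha0 : 0 ≤ a := htt0 ▸ httm.monotone (Fin.zero_le _)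
  have hdlast : d ≤ tt (Fin.last n) := httm.monotone (Fin.le_last _)
  have hwIntLast : IntegrableOn w (Ioo 0 (tt (Fin.last n))) := hw.2.2 _ httI
  have hwInt_t : IntegrableOn w (Ioo 0 t) := hwIntLast.mono_set (Set.Ioo_subset_Ioo_right ht1)
  have hwInt_d : IntegrableOn w (Ioo 0 d) := hwIntLast.mono_set (Set.Ioo_subset_Ioo_right hdlast)
  have hgInt : ∀ v : ℝ, IntegrableOn (stepFun n tt b) (Ioo 0 v) := fun v =>
    stepFun_integrable.integrableOn
  -- G decompositions
  have hGt : ∫ s in Ioo (0:ℝ) t, stepFun n tt b s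
      = (∫ s in Ioo (0:ℝ) a, stepFun n tt b s) + b i * (t - a) := by
    rw [integral_split ha0 (le_of_lt hat) (hgInt t),
      integral_stepFun_piece httm le_rfl (le_of_lt hat) htd]
  have hGd : ∫ s in Ioo (0:ℝ) d, stepFun n tt b s
      = (∫ s in Ioo (0:ℝ) a, stepFun n tt b s) + b i * (d - a) := by
    rw [integral_split ha0 (le_of_lt (lt_of_lt_of_le hat htd)) (hgInt d),
      integral_stepFun_piece httm le_rfl (le_of_lt (lt_of_lt_of_le hat htd)) le_rfl]
  -- W decompositions
  have hWt : ∫ s in Ioo (0:ℝ) t, w s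
      = (∫ s in Ioo (0:ℝ) a, w s) + ∫ s in Ioo a t, w s :=
    integral_split ha0 (le_of_lt hat) hwInt_t
  have hWd : ∫ s in Ioo (0:ℝ) d, w s
      = ((∫ s in Ioo (0:ℝ) a, w s) + ∫ s in Ioo a t, w s) + ∫ s in Ioo t d, w s := by
    rw [integral_split ht0.le htd hwInt_d, ← hWt]
  -- endpoint inequalities
  have hca : c * (∫ s in Ioo (0:ℝ) a, stepFun n tt b s) ≤ ∫ s in Ioo (0:ℝ) a, w s := by
    rcases Fin.eq_zero_or_eq_succ i.castSucc with h0 | ⟨j, hj⟩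
    · rw [ha, h0, htt0]
      simp [Set.Ioo_self]
    · rw [ha, hj]
      exact hc j
  have hcd := hc i
  rw [hGd, hWd] at hcd
  rw [hGt, hWt]
  exact arith_combo hat htd hca hcd
    (integral_w_ge hI hw httI ha0 (le_of_lt hat) ht0 ht1)
    (integral_w_le hI hw httI ht0 htd hdlast)

end StepAux3
section StepAux4

variable {I : Set ℝ} {w : ℝ → ℝ} {n : ℕ} {tt : Fin (n+1) → ℝ} {b : Fin n → ℝ}

lemma W_pos (hI : OLDomain I) (hw : IsWeight I w) (httI : tt (Fin.last n) ∈ I)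
    {t : ℝ} (ht : t ∈ Ioc 0 (tt (Fin.last n))) : 0 < ∫ s in Ioo (0:ℝ) t, w s := by
  have := integral_w_ge (T := tt (Fin.last n)) hI hw httI le_rfl ht.1.le ht.1 ht.2
  have hwt : 0 < w t := hw.1 t (mem_I_of_le hI httI ht.1.le ht.2)
  simp only [sub_zero] at this
  nlinarith [ht.1]

lemma G_pos (hn : 0 < n) (htt0 : tt 0 = 0) (httm : StrictMono tt) (hbpos : ∀ i, 0 < b i)
    {t : ℝ} (ht : 0 < t) : 0 < ∫ s in Ioo (0:ℝ) t, stepFun n tt b s := by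
  set i0 : Fin n := ⟨0, hn⟩ with hi0
  have hcs : tt i0.castSucc = 0 := by
    have : (i0.castSucc : Fin (n+1)) = 0 := rfl
    rw [this, htt0]
  have hpos : 0 < tt i0.succ := by
    rw [← hcs]
    exact httm Fin.castSucc_lt_succ
  set u := min t (tt i0.succ) with hu
  have hu0 : 0 < u := lt_min ht hpos
  have hpiece : ∫ s in Ioo (0:ℝ) u, stepFun n tt b s = b i0 * (u - 0) :=
    integral_stepFun_piece httm (by rw [hcs]) hu0.le (min_le_right _ _)
  have hmono : ∫ s in Ioo (0:ℝ) u, stepFun n tt b s ≤ ∫ s in Ioo (0:ℝ) t, stepFun n tt b s := by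
    apply setIntegral_mono_set stepFun_integrable.integrableOn
      (Filter.Eventually.of_forall fun x => stepFun_nonneg hbpos x)
      (HasSubset.Subset.eventuallyLE (Set.Ioo_subset_Ioo_right (min_le_left _ _)))
  have : 0 < b i0 * (u - 0) := by
    have := hbpos i0
    nlinarith
  linarith [hpiece ▸ this]

lemma lint_w_eq (hI : OLDomain I) (hw : IsWeight I w) {t : ℝ} (ht : t ∈ I) :
    ∫⁻ s in Ioo (0:ℝ) t, ENNReal.ofReal (w s) = ENNReal.ofReal (∫ s in Ioo (0:ℝ) t, w s) := by
  refine (ofReal_integral_eq_lintegral_ofReal (hw.2.2 t ht) ?_).symm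
  exact ae_restrict_of_forall_mem measurableSet_Ioo fun x hx =>
    (hw.1 x (mem_I_of_le hI ht hx.1.le hx.2.le)).le

lemma lint_G_eq (hbpos : ∀ i, 0 < b i) (t : ℝ) :
    ∫⁻ s in Ioo (0:ℝ) t, ENNReal.ofReal (stepFun n tt b s)
      = ENNReal.ofReal (∫ s in Ioo (0:ℝ) t, stepFun n tt b s) := by
  refine (ofReal_integral_eq_lintegral_ofReal stepFun_integrable.integrableOn ?_).symm
  exact Filter.Eventually.of_forall fun x => stepFun_nonneg hbpos x

lemma lint_decRearr_eq (hI : OLDomain I) (htt0 : tt 0 = 0) (httm : StrictMono tt)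
    (httI : tt (Fin.last n) ∈ I) (hb : Antitone b) (hbpos : ∀ i, 0 < b i)
    {t : ℝ} (ht : t ≤ tt (Fin.last n)) :
    ∫⁻ s in Ioo (0:ℝ) t, ENNReal.ofReal (decRearr I (stepFun n tt b) s)
      = ENNReal.ofReal (∫ s in Ioo (0:ℝ) t, stepFun n tt b s) := by
  rw [setLIntegral_congr_fun measurableSet_Ioo
    (fun s (hs : s ∈ Ioo (0:ℝ) t) => ?_), lint_G_eq hbpos]
  have hslast : s < tt (Fin.last n) := lt_of_lt_of_le hs.2 ht
  obtain ⟨j, hj1, hj2⟩ := exists_piece httm (htt0 ▸ hs.1.le) hslast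
  rw [decRearr_stepFun hI htt0 httm httI hb hbpos hj1 hj2, stepFun_eq httm hj1 hj2]

end StepAux4
theorem statement8 (I : Set ℝ) (hI : OLDomain I) (w : ℝ → ℝ) (hw : IsWeight I w)
    (n : ℕ) (hn : 0 < n) (tt : Fin (n+1) → ℝ) (b : Fin n → ℝ)
    (htt0 : tt 0 = 0) (httm : StrictMono tt) (httI : tt (Fin.last n) ∈ I)
    (hb : Antitone b) (hbpos : ∀ i, 0 < b i) :
    (sInf ((fun t => (∫ s in Ioo (0:ℝ) t, w s) / ∫ s in Ioo (0:ℝ) t, stepFun n tt b s) ''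
          Ioc 0 (tt (Fin.last n)))
        = ⨅ i : Fin n, (∫ s in Ioo (0:ℝ) (tt i.succ), w s) /
            ∫ s in Ioo (0:ℝ) (tt i.succ), stepFun n tt b s) ∧
    (Submaj I w (stepFun n tt b) ↔
      ∀ i : Fin n, (∫ s in Ioo (0:ℝ) (tt i.succ), stepFun n tt b s)
          ≤ ∫ s in Ioo (0:ℝ) (tt i.succ), w s) := by
  haveI : Nonempty (Fin n) := ⟨⟨0, hn⟩⟩
  set f : Fin n → ℝ := fun i => (∫ s in Ioo (0:ℝ) (tt i.succ), w s) /
      ∫ s in Ioo (0:ℝ) (tt i.succ), stepFun n tt b s with hf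
  have htmem : ∀ i : Fin n, tt i.succ ∈ Ioc 0 (tt (Fin.last n)) := fun i =>
    ⟨htt0 ▸ httm (Fin.succ_pos i), httm.monotone (Fin.le_last _)⟩
  have hGpos : ∀ i : Fin n, 0 < ∫ s in Ioo (0:ℝ) (tt i.succ), stepFun n tt b s := fun i =>
    G_pos hn htt0 httm hbpos (htmem i).1
  obtain ⟨i0, hi0⟩ := Finite.exists_min f
  have hiInf : (⨅ i, f i) = f i0 :=
    le_antisymm (ciInf_le (Set.finite_range f).bddBelow i0) (le_ciInf hi0)
  have hc : ∀ i : Fin n, f i0 * (∫ s in Ioo (0:ℝ) (tt i.succ), stepFun n tt b s)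
      ≤ ∫ s in Ioo (0:ℝ) (tt i.succ), w s := fun i =>
    (le_div_iff₀ (hGpos i)).1 (hi0 i)
  have hlb : ∀ x ∈ ((fun t => (∫ s in Ioo (0:ℝ) t, w s) /
      ∫ s in Ioo (0:ℝ) t, stepFun n tt b s) '' Ioc 0 (tt (Fin.last n))), f i0 ≤ x := by
    rintro x ⟨t, ht, rfl⟩
    exact (le_div_iff₀ (G_pos hn htt0 httm hbpos ht.1)).2
      (key_ineq hI hw htt0 httm httI (f i0) hc ht.1 ht.2)
  have hmem : f i0 ∈ ((fun t => (∫ s in Ioo (0:ℝ) t, w s) /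
      ∫ s in Ioo (0:ℝ) t, stepFun n tt b s) '' Ioc 0 (tt (Fin.last n))) :=
    ⟨tt i0.succ, htmem i0, rfl⟩
  constructor
  · exact (le_antisymm (csInf_le ⟨f i0, hlb⟩ hmem) (le_csInf ⟨_, hmem⟩ hlb)).trans hiInf.symm
  · constructor
    · intro hsub i
      have h := hsub (tt i.succ) (mem_I_of_le hI httI (htmem i).1.le (htmem i).2)
      rw [lint_decRearr_eq hI htt0 httm httI hb hbpos (htmem i).2,
        lint_w_eq hI hw (mem_I_of_le hI httI (htmem i).1.le (htmem i).2)] at h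
      exact (ENNReal.ofReal_le_ofReal_iff (W_pos hI hw httI (htmem i)).le).1 h
    · intro h t htI
      have ht0 : 0 ≤ t := by
        rcases hI with rfl | ⟨α, hα, rfl⟩
        · exact htI
        · exact htI.1
      rcases eq_or_lt_of_le ht0 with rfl | htpos
      · simp [Set.Ioo_self]
      have hc1 : ∀ i : Fin n, (1:ℝ) * (∫ s in Ioo (0:ℝ) (tt i.succ), stepFun n tt b s)
          ≤ ∫ s in Ioo (0:ℝ) (tt i.succ), w s := by
        intro i; rw [one_mul]; exact h i
      rcases le_or_gt t (tt (Fin.last n)) with hle | hgt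
      · have hkey := key_ineq hI hw htt0 httm httI 1 hc1 htpos hle
        rw [one_mul] at hkey
        rw [lint_decRearr_eq hI htt0 httm httI hb hbpos hle, lint_w_eq hI hw htI]
        exact ENNReal.ofReal_le_ofReal hkey
      · have hlastpos : 0 < tt (Fin.last n) := by
          rw [← htt0]
          exact httm (by simp [Fin.lt_def, hn])
        have hkey := key_ineq hI hw htt0 httm httI 1 hc1 hlastpos le_rfl
        rw [one_mul] at hkey
        have hdisj : Disjoint (Ioo (0:ℝ) (tt (Fin.last n))) (Ico (tt (Fin.last n)) t) :=
          Set.disjoint_left.2 fun x hx hx' => absurd hx.2 (not_lt.2 hx'.1)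
        rw [← Set.Ioo_union_Ico_eq_Ioo hlastpos hgt.le,
          lintegral_union measurableSet_Ico hdisj]
        have h2 : ∫⁻ s in Ico (tt (Fin.last n)) t,
            ENNReal.ofReal (decRearr I (stepFun n tt b) s) = 0 := by
          rw [setLIntegral_congr_fun (g := fun _ => 0) measurableSet_Ico
            (fun s (hs : s ∈ Ico (tt (Fin.last n)) t) => by
              rw [decRearr_stepFun_zero htt0 httm hbpos hs.1]
              simp)]
          simp
        rw [h2, add_zero]
        calc ∫⁻ s in Ioo (0:ℝ) (tt (Fin.last n)),
              ENNReal.ofReal (decRearr I (stepFun n tt b) s)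
            = ENNReal.ofReal (∫ s in Ioo (0:ℝ) (tt (Fin.last n)), stepFun n tt b s) :=
              lint_decRearr_eq hI htt0 httm httI hb hbpos le_rfl
          _ ≤ ENNReal.ofReal (∫ s in Ioo (0:ℝ) (tt (Fin.last n)), w s) :=
              ENNReal.ofReal_le_ofReal hkey
          _ = ∫⁻ s in Ioo (0:ℝ) (tt (Fin.last n)), ENNReal.ofReal (w s) :=
              (lint_w_eq hI hw httI).symm
          _ ≤ ∫⁻ s in Ioo (0:ℝ) (tt (Fin.last n)) ∪ Ico (tt (Fin.last n)) t,
              ENNReal.ofReal (w s) :=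
              lintegral_mono_set (by
                rw [Set.Ioo_union_Ico_eq_Ioo hlastpos hgt.le]
                exact Set.Ioo_subset_Ioo_right hgt.le)
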